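/- Let Θ be a compact metric space and g_n : Ω × Θ → ℝ^p a sequence of random functions. If (i) for each θ ∈ Θ, g_n(θ) converges in probability to a deterministic limit g(θ), and (ii) {g_n} is stochastically uniformly equicontinuous on Θ, then: (1) g_n converges uniformly in probability, i.e. sup_{θ∈Θ} ‖g_n(θ) − g(θ)‖ → 0 in probability; and (2) the limit g is uniformly continuous on Θ. -/

import Mathlib

open MeasureTheory Filter Topology

/-!
STATEMENT 11 (Uniform consistency, Lemma `thm:uniform`).

`Θ` compact metric, `g n : Ω → Θ → ℝ^p` random functions.  If (i) for each `θ`,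
`g n θ → g θ` in probability for a deterministic limit `g`, and (ii) `{g n}` is
stochastically uniformly equicontinuous on `Θ`, then (1) `g n → g` uniformly in
probability (formalized via the events `{∃ θ, ε < ‖g n θ - g θ‖}`), and (2) `g` is
uniformly continuous on `Θ`.
-/

/-- Convergence in probability. -/
def TendstoInProb {Ω E : Type*} [MeasurableSpace Ω] [PseudoMetricSpace E]
    (P : Measure Ω) (X : ℕ → Ω → E) (c : E) : Prop :=
  ∀ ε : ℝ, 0 < ε → Tendsto (fun n => P {ω | ε < dist (X n ω) c}) atTop (nhds 0)

/-- Stochastic uniform equicontinuity of a sequence of random functions. -/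
def StochasticallyUniformlyEquicontinuous {Ω Θ E : Type*} [MeasurableSpace Ω]
    [PseudoMetricSpace Θ] [SeminormedAddCommGroup E]
    (P : Measure Ω) (g : ℕ → Ω → Θ → E) : Prop :=
  ∀ ε : ℝ, 0 < ε → ∃ δ : ℝ, 0 < δ ∧
    limsup (fun n =>
      P {ω | ∃ θ θ' : Θ, dist θ θ' < δ ∧ ε < ‖g n ω θ' - g n ω θ‖}) atTop
      < ENNReal.ofReal ε

theorem uniform_consistency
    {Ω Θ : Type*} [MeasurableSpace Ω] [MetricSpace Θ] [CompactSpace Θ] {p : ℕ}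
    (P : Measure Ω) [IsProbabilityMeasure P]
    (g : ℕ → Ω → Θ → EuclideanSpace ℝ (Fin p))
    (glim : Θ → EuclideanSpace ℝ (Fin p))
    (hpt : ∀ θ : Θ, TendstoInProb P (fun n ω => g n ω θ) (glim θ))
    (hequi : StochasticallyUniformlyEquicontinuous P g) :
    (∀ ε : ℝ, 0 < ε →
      Tendsto (fun n => P {ω | ∃ θ : Θ, ε < ‖g n ω θ - glim θ‖}) atTop (nhds 0)) ∧
      UniformContinuous glim := by
  -- Step 1: uniform continuity (modulus with ≤)
  have huc : ∀ ε : ℝ, 0 < ε → ∃ δ : ℝ, 0 < δ ∧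
      ∀ θ θ' : Θ, dist θ θ' < δ → dist (glim θ') (glim θ) ≤ ε := by
    intro ε hε
    set ε' : ℝ := min (ε / 3) (1 / 4) with hε'def
    have hε'pos : 0 < ε' := lt_min (by linarith) (by norm_num)
    have hε'le : ε' ≤ ε / 3 := min_le_left _ _
    have hε'le4 : ε' ≤ 1 / 4 := min_le_right _ _
    obtain ⟨δ, hδ, hlim⟩ := hequi ε' hε'pos
    refine ⟨δ, hδ, fun θ θ' hθθ => ?_⟩
    by_contra hcon
    push_neg at hcon
    -- three eventual bounds
    have hA : ∀ᶠ n in atTop,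
        P {ω | ε' < dist (g n ω θ) (glim θ)} ≤ ENNReal.ofReal ε' :=
      ENNReal.tendsto_nhds_zero.mp (hpt θ ε' hε'pos) _
        (by simpa using ENNReal.ofReal_pos.mpr hε'pos)
    have hB : ∀ᶠ n in atTop,
        P {ω | ε' < dist (g n ω θ') (glim θ')} ≤ ENNReal.ofReal ε' :=
      ENNReal.tendsto_nhds_zero.mp (hpt θ' ε' hε'pos) _
        (by simpa using ENNReal.ofReal_pos.mpr hε'pos)
    have hC : ∀ᶠ n in atTop,
        P {ω | ∃ a b : Θ, dist a b < δ ∧ ε' < ‖g n ω b - g n ω a‖}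
          ≤ ENNReal.ofReal ε' :=
      (Filter.eventually_lt_of_limsup_lt hlim).mono fun n h => le_of_lt h
    obtain ⟨n, ⟨hnA, hnB⟩, hnC⟩ := ((hA.and hB).and hC).exists
    set A := {ω | ε' < dist (g n ω θ) (glim θ)}
    set B := {ω | ε' < dist (g n ω θ') (glim θ')}
    set C := {ω | ∃ a b : Θ, dist a b < δ ∧ ε' < ‖g n ω b - g n ω a‖}
    have hsub : ¬ (Set.univ : Set Ω) ⊆ A ∪ B ∪ C := by
      intro hsub
      have h1 : P (Set.univ : Set Ω) ≤ P (A ∪ B ∪ C) := measure_mono hsub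
      have h2 : P (A ∪ B ∪ C) ≤ P A + P B + P C :=
        le_trans (measure_union_le _ _) (add_le_add_left (measure_union_le _ _) _)
      have h3 : P A + P B + P C ≤
          ENNReal.ofReal ε' + ENNReal.ofReal ε' + ENNReal.ofReal ε' := by
        exact add_le_add (add_le_add hnA hnB) hnC
      have h4 : ENNReal.ofReal ε' + ENNReal.ofReal ε' + ENNReal.ofReal ε'
          = ENNReal.ofReal (ε' + ε' + ε') := by
        rw [← ENNReal.ofReal_add hε'pos.le hε'pos.le,
          ← ENNReal.ofReal_add (by positivity) hε'pos.le]
      have h5 : ENNReal.ofReal (ε' + ε' + ε') < 1 := by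
        rw [ENNReal.ofReal_lt_one]; linarith
      have : P (Set.univ : Set Ω) < 1 := lt_of_le_of_lt (h1.trans (h2.trans h3)) (h4 ▸ h5)
      simp [measure_univ] at this
    obtain ⟨ω, -, hω⟩ := Set.not_subset.mp hsub
    simp only [Set.mem_union, not_or] at hω
    obtain ⟨⟨hωA, hωB⟩, hωC⟩ := hω
    have h1 : dist (g n ω θ) (glim θ) ≤ ε' := le_of_not_gt hωA
    have h2 : dist (g n ω θ') (glim θ') ≤ ε' := le_of_not_gt hωB
    have h3 : ‖g n ω θ' - g n ω θ‖ ≤ ε' := by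
      by_contra h3
      exact hωC ⟨θ, θ', hθθ, lt_of_not_ge h3⟩
    have htri : dist (glim θ') (glim θ) ≤
        dist (glim θ') (g n ω θ') + dist (g n ω θ') (g n ω θ) + dist (g n ω θ) (glim θ) :=
      dist_triangle4 _ _ _ _
    rw [dist_comm (glim θ') (g n ω θ')] at htri
    have h3' : dist (g n ω θ') (g n ω θ) ≤ ε' := by rw [dist_eq_norm]; exact h3
    have : dist (glim θ') (glim θ) ≤ ε' + ε' + ε' := by
      refine htri.trans ?_
      gcongr
    have hcon3 : dist (glim θ') (glim θ) ≤ ε := by linarith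
    linarith [hcon]
  constructor
  · -- Part 1: uniform convergence in probability
    intro ε hε
    rw [ENNReal.tendsto_nhds_zero]
    intro η hη
    -- pick a real s with 0 < s and ofReal s ≤ η
    set s : ℝ := (min η 1).toReal with hsdef
    have hmin_pos : 0 < min η 1 := lt_min hη (by norm_num)
    have hmin_ne_top : min η 1 ≠ ⊤ := ne_top_of_le_ne_top (by norm_num) (min_le_right _ _)
    have hs : 0 < s := ENNReal.toReal_pos hmin_pos.ne' hmin_ne_top
    have hsle : ENNReal.ofReal s ≤ η := by
      rw [hsdef, ENNReal.ofReal_toReal hmin_ne_top]; exact min_le_left _ _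
    -- parameters
    set ε₀ : ℝ := min (ε / 3) (s / 2) with hε₀def
    have hε₀pos : 0 < ε₀ := lt_min (by linarith) (by linarith)
    have hε₀le : ε₀ ≤ ε / 3 := min_le_left _ _
    have hε₀les : ε₀ ≤ s / 2 := min_le_right _ _
    obtain ⟨δ₁, hδ₁, hlim⟩ := hequi ε₀ hε₀pos
    obtain ⟨δ₂, hδ₂, hδ₂uc⟩ := huc (ε / 3) (by linarith)
    set δ : ℝ := min δ₁ δ₂ with hδdef
    have hδpos : 0 < δ := lt_min hδ₁ hδ₂
    -- finite cover
    have hcov : (Set.univ : Set Θ) ⊆ ⋃ i : Θ, Metric.ball i δ := by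
      intro θ _
      exact Set.mem_iUnion.mpr ⟨θ, Metric.mem_ball_self hδpos⟩
    obtain ⟨T, hT⟩ := isCompact_univ.elim_finite_subcover
      (fun i : Θ => Metric.ball i δ) (fun i => Metric.isOpen_ball) hcov
    -- event inclusion
    have hincl : ∀ n : ℕ, {ω : Ω | ∃ θ : Θ, ε < ‖g n ω θ - glim θ‖} ⊆
        {ω | ∃ a b : Θ, dist a b < δ₁ ∧ ε₀ < ‖g n ω b - g n ω a‖} ∪
          ⋃ i ∈ T, {ω | ε / 3 < dist (g n ω i) (glim i)} := by
      intro n ω hω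
      obtain ⟨θ, hθ⟩ := hω
      obtain ⟨i, hiT, hθi⟩ := Set.mem_iUnion₂.mp (hT (Set.mem_univ θ))
      have hdθi : dist θ i < δ := Metric.mem_ball.mp hθi
      have hd1 : dist i θ < δ₁ := by
        rw [dist_comm]; exact lt_of_lt_of_le hdθi (min_le_left _ _)
      have hd2 : dist θ i < δ₂ := lt_of_lt_of_le hdθi (min_le_right _ _)
      have hglim : dist (glim i) (glim θ) ≤ ε / 3 := hδ₂uc θ i hd2
      have htri : ‖g n ω θ - glim θ‖ ≤
          dist (g n ω θ) (g n ω i) + dist (g n ω i) (glim i) + dist (glim i) (glim θ) := by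
        rw [← dist_eq_norm]
        exact dist_triangle4 _ _ _ _
      by_cases hcase : ε / 3 < dist (g n ω i) (glim i)
      · exact Or.inr (Set.mem_iUnion₂.mpr ⟨i, hiT, hcase⟩)
      · push_neg at hcase
        have hfirst : ε / 3 < dist (g n ω θ) (g n ω i) := by
          nlinarith [hθ, htri, hglim, hcase]
        refine Or.inl ⟨i, θ, hd1, ?_⟩
        rw [← dist_eq_norm]
        exact lt_of_le_of_lt (by linarith) hfirst
    -- measure bound
    have hE : ∀ᶠ n in atTop,
        P {ω | ∃ a b : Θ, dist a b < δ₁ ∧ ε₀ < ‖g n ω b - g n ω a‖}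
          ≤ ENNReal.ofReal (s / 2) :=
      (Filter.eventually_lt_of_limsup_lt hlim).mono fun n h =>
        (le_of_lt h).trans (ENNReal.ofReal_le_ofReal hε₀les)
    set c : ENNReal := ENNReal.ofReal (s / 2) / ((T.card : ENNReal) + 1) with hcdef
    have hcardne : ((T.card : ENNReal) + 1) ≠ 0 := by simp
    have hcardnetop : ((T.card : ENNReal) + 1) ≠ ⊤ := by simp [ENNReal.add_ne_top]
    have hcpos : 0 < c := by
      rw [hcdef]
      exact ENNReal.div_pos (by simpa using ENNReal.ofReal_pos.mpr (by linarith : (0:ℝ) < s/2))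
        hcardnetop
    have hF : ∀ᶠ n in atTop, ∀ i ∈ T,
        P {ω | ε / 3 < dist (g n ω i) (glim i)} ≤ c := by
      rw [Filter.eventually_all_finset]
      intro i _
      exact ENNReal.tendsto_nhds_zero.mp (hpt i (ε / 3) (by linarith)) c hcpos
    filter_upwards [hE, hF] with n hEn hFn
    calc P {ω : Ω | ∃ θ : Θ, ε < ‖g n ω θ - glim θ‖}
        ≤ P ({ω | ∃ a b : Θ, dist a b < δ₁ ∧ ε₀ < ‖g n ω b - g n ω a‖} ∪
            ⋃ i ∈ T, {ω | ε / 3 < dist (g n ω i) (glim i)}) := measure_mono (hincl n)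
      _ ≤ P {ω | ∃ a b : Θ, dist a b < δ₁ ∧ ε₀ < ‖g n ω b - g n ω a‖} +
            P (⋃ i ∈ T, {ω | ε / 3 < dist (g n ω i) (glim i)}) := measure_union_le _ _
      _ ≤ ENNReal.ofReal (s / 2) + ∑ i ∈ T, P {ω | ε / 3 < dist (g n ω i) (glim i)} :=
            add_le_add hEn (measure_biUnion_finset_le _ _)
      _ ≤ ENNReal.ofReal (s / 2) + ∑ _i ∈ T, c :=
            add_le_add_right (Finset.sum_le_sum hFn) _
      _ = ENNReal.ofReal (s / 2) + T.card • c := by rw [Finset.sum_const]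
      _ ≤ ENNReal.ofReal (s / 2) + ((T.card : ENNReal) + 1) * c := by
            rw [nsmul_eq_mul]
            gcongr
            exact le_add_of_nonneg_right zero_le_one
      _ = ENNReal.ofReal (s / 2) + ENNReal.ofReal (s / 2) := by
            rw [hcdef, ENNReal.mul_div_cancel hcardne hcardnetop]
      _ = ENNReal.ofReal s := by
            rw [← ENNReal.ofReal_add (by linarith) (by linarith)]
            ring_nf
      _ ≤ η := hsle
  · -- Part 2: uniform continuity
    rw [Metric.uniformContinuous_iff]
    intro ε hε
    obtain ⟨δ, hδ, h⟩ := huc (ε / 2) (by linarith)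
    refine ⟨δ, hδ, fun {a b} hab => ?_⟩
    have := h b a (by rwa [dist_comm])
    calc dist (glim a) (glim b) ≤ ε / 2 := this
      _ < ε := by linarith
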